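/- The Banach space C[0,1] of continuous real-valued functions on the unit interval [0,1], equipped with the supremum norm, is not decomposably octahedral. -/

import Mathlib

/-- Decomposable octahedrality (DOH). -/
def DecomposablyOctahedral (X : Type*) [NormedAddCommGroup X] [NormedSpace ℝ X] : Prop :=
  ∀ E : Finset X, (∀ x ∈ E, ‖x‖ = 1) → ∀ ε : ℝ, 0 < ε → ∃ y : X, ‖y‖ = 1 ∧
    ∀ (n : ℕ) (ys : Fin n → X), ∑ i, ys i = y →
      ∀ xs : Fin n → X, (∀ i, xs i ∈ E) →
      ∀ a b : Fin n → ℝ, (∀ i, 0 ≤ a i) → (∀ i, 0 ≤ b i) →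
        (1 - ε) * ((∑ i, (a i + b i)) + 2) ≤
          ∑ i, (‖a i • xs i + ys i‖ + ‖b i • xs i - ys i‖)

noncomputable def dohG : C(Set.Icc (0 : ℝ) 1, ℝ) :=
  ⟨fun t => 2 * (t : ℝ) - 1, by fun_prop⟩

noncomputable def dohH : C(Set.Icc (0 : ℝ) 1, ℝ) :=
  ⟨fun t => 1 - |2 * (t : ℝ) - 1|, by fun_prop⟩

lemma dohAbs (t : Set.Icc (0 : ℝ) 1) : |2 * (t : ℝ) - 1| ≤ 1 :=
  abs_le.mpr ⟨by linarith [t.2.1], by linarith [t.2.2]⟩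

lemma dohG_norm : ‖dohG‖ = 1 := by
  apply le_antisymm
  · exact (ContinuousMap.norm_le _ zero_le_one).mpr fun t => by
      simpa [dohG, Real.norm_eq_abs] using dohAbs t
  · have h := dohG.norm_coe_le_norm ⟨1, by norm_num⟩
    norm_num [dohG, Real.norm_eq_abs] at h
    exact h

lemma dohH_norm : ‖dohH‖ = 1 := by
  apply le_antisymm
  · apply (ContinuousMap.norm_le _ zero_le_one).mpr
    intro t
    have h1 := dohAbs t
    have h2 : (0:ℝ) ≤ |2 * (t : ℝ) - 1| := abs_nonneg _
    simp only [dohH, ContinuousMap.coe_mk, Real.norm_eq_abs]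
    rw [abs_le]; constructor <;> linarith
  · have h := dohH.norm_coe_le_norm ⟨1/2, by norm_num⟩
    norm_num [dohH, Real.norm_eq_abs] at h
    exact h

lemma dohClamp (u c : ℝ) (hc0 : 0 ≤ c) (hc2 : c ≤ 2) (hu : |u| ≤ 1) :
    |u - max (-c) (min u c)| ≤ 2 - c ∧ |max (-c) (min u c)| ≤ c := by
  have hu1 : -1 ≤ u := neg_le_of_abs_le hu
  have hu2 : u ≤ 1 := le_of_abs_le hu
  rcases le_total u c with h1 | h1
  · rcases le_total (-c) u with h2 | h2
    · rw [min_eq_left h1, max_eq_right h2]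
      exact ⟨by simp; linarith, abs_le.mpr ⟨by linarith, by linarith⟩⟩
    · rw [min_eq_left h1, max_eq_left h2]
      exact ⟨abs_le.mpr ⟨by linarith, by linarith⟩, abs_le.mpr ⟨by linarith, by linarith⟩⟩
  · rw [min_eq_right h1, max_eq_right (by linarith : -c ≤ c)]
    exact ⟨abs_le.mpr ⟨by linarith, by linarith⟩, abs_le.mpr ⟨by linarith, by linarith⟩⟩

/-- The space `C[0,1]` with the supremum norm is not decomposably octahedral. -/
theorem not_doh_continuousMap_Icc :
    ¬ DecomposablyOctahedral C(Set.Icc (0 : ℝ) 1, ℝ) := by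
  classical
  intro H
  obtain ⟨y, hy1, hy2⟩ := H {dohG, dohH}
    (by
      intro x hx
      rcases Finset.mem_insert.mp hx with rfl | hx
      · exact dohG_norm
      · rw [Finset.mem_singleton.mp hx]; exact dohH_norm)
    (1/10) (by norm_num)
  set y₂ : C(Set.Icc (0 : ℝ) 1, ℝ) :=
    ⟨fun t => max (-(2 * |2 * (t : ℝ) - 1|)) (min (y t) (2 * |2 * (t : ℝ) - 1|)),
      by fun_prop⟩ with hy₂def
  have hpt : ∀ t : Set.Icc (0:ℝ) 1,
      |y t - y₂ t| ≤ 2 - 2 * |2 * (t : ℝ) - 1| ∧ |y₂ t| ≤ 2 * |2 * (t : ℝ) - 1| := by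
    intro t
    have hu : |y t| ≤ 1 := by
      have h := y.norm_coe_le_norm t
      rwa [hy1, Real.norm_eq_abs] at h
    have hcc2 : 2 * |2 * (t : ℝ) - 1| ≤ 2 := by linarith [dohAbs t]
    have hcc0 : (0:ℝ) ≤ 2 * |2 * (t : ℝ) - 1| := by positivity
    exact dohClamp (y t) _ hcc0 hcc2 hu
  have habsg : ∀ t : Set.Icc (0:ℝ) 1, |2 * (2 * (t : ℝ) - 1)| = 2 * |2 * (t : ℝ) - 1| := by
    intro t
    rw [abs_mul]
    norm_num
  have B1 : ‖(2:ℝ) • dohG + (y - y₂)‖ ≤ 2 := by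
    apply (ContinuousMap.norm_le _ (by norm_num)).mpr
    intro t
    have heq : ((2:ℝ) • dohG + (y - y₂)) t = 2 * (2 * (t : ℝ) - 1) + (y t - y₂ t) := rfl
    rw [heq, Real.norm_eq_abs]
    calc |2 * (2 * (t : ℝ) - 1) + (y t - y₂ t)|
        ≤ |2 * (2 * (t : ℝ) - 1)| + |y t - y₂ t| := abs_add_le _ _
      _ ≤ 2 := by rw [habsg t]; linarith [(hpt t).1]
  have B2 : ‖(2:ℝ) • dohG - (y - y₂)‖ ≤ 2 := by
    apply (ContinuousMap.norm_le _ (by norm_num)).mpr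
    intro t
    have heq : ((2:ℝ) • dohG - (y - y₂)) t = 2 * (2 * (t : ℝ) - 1) - (y t - y₂ t) := rfl
    rw [heq, Real.norm_eq_abs]
    calc |2 * (2 * (t : ℝ) - 1) - (y t - y₂ t)|
        ≤ |2 * (2 * (t : ℝ) - 1)| + |y t - y₂ t| := abs_sub _ _
      _ ≤ 2 := by rw [habsg t]; linarith [(hpt t).1]
  have B3 : ‖(2:ℝ) • dohH + y₂‖ ≤ 2 := by
    apply (ContinuousMap.norm_le _ (by norm_num)).mpr
    intro t
    have heq : ((2:ℝ) • dohH + y₂) t = 2 * (1 - |2 * (t : ℝ) - 1|) + y₂ t := rfl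
    rw [heq, Real.norm_eq_abs]
    have h1 := (hpt t).2
    have h2 := abs_le.mp h1
    have h3 : (0:ℝ) ≤ |2 * (t : ℝ) - 1| := abs_nonneg _
    have h4 := dohAbs t
    rw [abs_le]
    constructor <;> [linarith [h2.1]; linarith [h2.2]]
  have B4 : ‖(2:ℝ) • dohH - y₂‖ ≤ 2 := by
    apply (ContinuousMap.norm_le _ (by norm_num)).mpr
    intro t
    have heq : ((2:ℝ) • dohH - y₂) t = 2 * (1 - |2 * (t : ℝ) - 1|) - y₂ t := rfl
    rw [heq, Real.norm_eq_abs]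
    have h1 := (hpt t).2
    have h2 := abs_le.mp h1
    have h3 : (0:ℝ) ≤ |2 * (t : ℝ) - 1| := abs_nonneg _
    have h4 := dohAbs t
    rw [abs_le]
    constructor <;> [linarith [h2.2]; linarith [h2.1]]
  have key := hy2 2 ![y - y₂, y₂] (by simp [Fin.sum_univ_two]) ![dohG, dohH]
    (by intro i; fin_cases i <;> simp) ![2, 2] ![2, 2]
    (by intro i; fin_cases i <;> norm_num) (by intro i; fin_cases i <;> norm_num)
  simp only [Fin.sum_univ_two, Matrix.cons_val_zero, Matrix.cons_val_one, Matrix.head_cons] at key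
  norm_num at key
  linarith [B1, B2, B3, B4, key]
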